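/- For p, η ∈ [0,1], let A_{p,η} be the amplitude damping channel on 2×2 complex matrices with Kraus operators A₁ = √p·[[1,0],[0,√η]], A₂ = √p·[[0,√(1−η)],[0,0]], A₃ = √(1−p)·[[√η,0],[0,1]], A₄ = √(1−p)·[[0,0],[√(1−η),0]]. Then, with |+⟩ = (e₀+e₁)/√2 and |−⟩ = (e₀−e₁)/√2, one has (1/2)‖A_{p,η}(|+⟩⟨+|) − A_{p,η}(|−⟩⟨−|)‖₁ = √η, and consequently the trace norm contraction coefficient satisfies η_tr(A_{p,η}) ≥ √η. -/

import Mathlib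

open Matrix Kronecker BigOperators
open scoped ComplexOrder

noncomputable section

/-- Square root of a positive semidefinite matrix (Mathlib's former `Matrix.PosSemidef.sqrt`). -/
def Matrix.PosSemidef.sqrt {n 𝕜 : Type*} [Fintype n] [RCLike 𝕜] [DecidableEq n] {A : Matrix n n 𝕜}
    (hA : A.PosSemidef) : Matrix n n 𝕜 :=
  (hA.1.eigenvectorUnitary : Matrix n n 𝕜) *
    diagonal (fun i => ((Real.sqrt (hA.1.eigenvalues i) : ℝ) : 𝕜)) *
    (star hA.1.eigenvectorUnitary : Matrix n n 𝕜)

/-- The trace norm (sum of singular values) of a complex matrix: `tr √(AᴴA)`. -/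
def traceNorm {m n : Type*} [Fintype m] [Fintype n] [DecidableEq n] (A : Matrix m n ℂ) : ℝ :=
  ((Matrix.posSemidef_conjTranspose_mul_self A).sqrt).trace.re

/-- A density matrix: positive semidefinite with trace one. -/
def IsDensity {n : Type*} [Fintype n] [DecidableEq n] (ρ : Matrix n n ℂ) : Prop :=
  ρ.PosSemidef ∧ ρ.trace = 1

/-- Trace norm contraction coefficient of a map on matrices. -/
def etaTr {dA dB : ℕ} (Φ : Matrix (Fin dA) (Fin dA) ℂ → Matrix (Fin dB) (Fin dB) ℂ) : ℝ :=
  sSup {r : ℝ | ∃ ρ σ : Matrix (Fin dA) (Fin dA) ℂ, IsDensity ρ ∧ IsDensity σ ∧ ρ ≠ σ ∧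
    r = traceNorm (Φ ρ - Φ σ) / traceNorm (ρ - σ)}

/-- Optimal success probability for transmitting one of `k` messages through `Φ`. -/
def Psucc {dA dB : ℕ} (Φ : Matrix (Fin dA) (Fin dA) ℂ → Matrix (Fin dB) (Fin dB) ℂ)
    (k : ℕ) : ℝ :=
  sSup {r : ℝ | ∃ (M : Fin k → Matrix (Fin dB) (Fin dB) ℂ)
      (ρ : Fin k → Matrix (Fin dA) (Fin dA) ℂ),
    (∀ i, (M i).PosSemidef) ∧ (∑ i, M i = 1) ∧ (∀ i, IsDensity (ρ i)) ∧
    r = (1 / (k : ℝ)) * ∑ i, ((M i * Φ (ρ i)).trace).re}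

/-- The Euclidean (ℓ₂) norm of a complex vector. -/
def l2norm {n : Type*} [Fintype n] (v : n → ℂ) : ℝ :=
  Real.sqrt (∑ i, ‖v i‖ ^ 2)

/-- Choi state of a map on matrices: `(1/dA) ∑ᵢⱼ Eᵢⱼ ⊗ Φ(Eᵢⱼ)`. -/
def choi {dA dB : ℕ} (Φ : Matrix (Fin dA) (Fin dA) ℂ → Matrix (Fin dB) (Fin dB) ℂ) :
    Matrix (Fin dA × Fin dB) (Fin dA × Fin dB) ℂ :=
  (dA : ℂ)⁻¹ • ∑ i : Fin dA, ∑ j : Fin dA,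
    (Matrix.single i j (1 : ℂ)) ⊗ₖ (Φ (Matrix.single i j (1 : ℂ)))

/-- Kraus operators of the amplitude damping channel `A_{p,η}`. -/
def ampK (p η : ℝ) : Fin 4 → Matrix (Fin 2) (Fin 2) ℂ :=
  ![(Real.sqrt p : ℂ) • !![1, 0; 0, (Real.sqrt η : ℂ)],
    (Real.sqrt p : ℂ) • !![0, (Real.sqrt (1 - η) : ℂ); 0, 0],
    (Real.sqrt (1 - p) : ℂ) • !![(Real.sqrt η : ℂ), 0; 0, 1],
    (Real.sqrt (1 - p) : ℂ) • !![0, 0; (Real.sqrt (1 - η) : ℂ), 0]]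

/-- The state `|+⟩ = (e₀ + e₁)/√2`. -/
def ketPlus : Fin 2 → ℂ := ![((Real.sqrt 2 : ℂ))⁻¹, ((Real.sqrt 2 : ℂ))⁻¹]

/-- The state `|−⟩ = (e₀ − e₁)/√2`. -/
def ketMinus : Fin 2 → ℂ := ![((Real.sqrt 2 : ℂ))⁻¹, -((Real.sqrt 2 : ℂ))⁻¹]


lemma trace_unitary_conj {n : Type*} [Fintype n] [DecidableEq n]
    (U : Matrix.unitaryGroup n ℂ) (D : Matrix n n ℂ) :
    ((U : Matrix n n ℂ) * D * (star U : Matrix n n ℂ)).trace = D.trace := by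
  rw [Matrix.trace_mul_cycle]
  rw [show ((star U : Matrix n n ℂ) * U) = 1 from Matrix.UnitaryGroup.star_mul_self U, one_mul]

lemma trace_sqrt_eq {n : Type*} [Fintype n] [DecidableEq n] (A : Matrix n n ℂ) :
    ((Matrix.posSemidef_conjTranspose_mul_self A).sqrt).trace
      = ∑ i, (Real.sqrt ((Matrix.posSemidef_conjTranspose_mul_self A).1.eigenvalues i) : ℂ) := by
  rw [Matrix.PosSemidef.sqrt, trace_unitary_conj, Matrix.trace_diagonal]
  rfl

lemma trace_eq_sum_eig {n : Type*} [Fintype n] [DecidableEq n] {M : Matrix n n ℂ}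
    (hM : M.IsHermitian) : M.trace = ∑ i, (hM.eigenvalues i : ℂ) := by
  conv_lhs => rw [hM.spectral_theorem]
  rw [Unitary.conjStarAlgAut_apply, trace_unitary_conj, Matrix.trace_diagonal]
  rfl

lemma trace_conjTranspose_mul_self {n : Type*} [Fintype n] [DecidableEq n] (A : Matrix n n ℂ) :
    (Aᴴ * A).trace = ((∑ i, ∑ j, ‖A i j‖ ^ 2 : ℝ) : ℂ) := by
  push_cast
  rw [Matrix.trace]
  rw [Finset.sum_comm]
  congr 1; ext j
  simp only [Matrix.diag_apply, Matrix.mul_apply, Matrix.conjTranspose_apply]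
  congr 1; ext i
  rw [Complex.star_def, ← Complex.normSq_eq_conj_mul_self]
  rw [← Complex.sq_norm]
  norm_cast

lemma traceNorm_eq_sum_sqrt {n : Type*} [Fintype n] [DecidableEq n] (A : Matrix n n ℂ) :
    traceNorm A = ∑ i, Real.sqrt ((Matrix.posSemidef_conjTranspose_mul_self A).1.eigenvalues i) := by
  rw [traceNorm, trace_sqrt_eq, Complex.re_sum]
  simp

lemma sum_eig_eq_frob {n : Type*} [Fintype n] [DecidableEq n] (A : Matrix n n ℂ) :
    ∑ i, (Matrix.posSemidef_conjTranspose_mul_self A).1.eigenvalues i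
      = ∑ i, ∑ j, ‖A i j‖ ^ 2 := by
  have h := (trace_eq_sum_eig (Matrix.posSemidef_conjTranspose_mul_self A).1).symm.trans
    (trace_conjTranspose_mul_self A)
  exact_mod_cast h

lemma traceNorm_nonneg' {n : Type*} [Fintype n] [DecidableEq n] (A : Matrix n n ℂ) :
    0 ≤ traceNorm A := by
  rw [traceNorm_eq_sum_sqrt]
  exact Finset.sum_nonneg fun i _ => Real.sqrt_nonneg _

lemma frob_le_sq_traceNorm {n : Type*} [Fintype n] [DecidableEq n] (A : Matrix n n ℂ) :
    ∑ i, ∑ j, ‖A i j‖ ^ 2 ≤ (traceNorm A) ^ 2 := by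
  rw [← sum_eig_eq_frob, traceNorm_eq_sum_sqrt]
  calc ∑ i, (Matrix.posSemidef_conjTranspose_mul_self A).1.eigenvalues i
      = ∑ i, (Real.sqrt ((Matrix.posSemidef_conjTranspose_mul_self A).1.eigenvalues i)) ^ 2 := by
        refine Finset.sum_congr rfl fun i _ => ?_
        rw [Real.sq_sqrt ((Matrix.posSemidef_conjTranspose_mul_self A).eigenvalues_nonneg i)]
    _ ≤ _ := Finset.sum_sq_le_sq_sum_of_nonneg fun i _ => Real.sqrt_nonneg _

lemma entry_le_traceNorm {n : Type*} [Fintype n] [DecidableEq n] (A : Matrix n n ℂ) (i j : n) :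
    ‖A i j‖ ≤ traceNorm A := by
  have h1 : ‖A i j‖ ^ 2 ≤ ∑ a, ∑ b, ‖A a b‖ ^ 2 := by
    calc ‖A i j‖ ^ 2 ≤ ∑ b, ‖A i b‖ ^ 2 :=
          Finset.single_le_sum (f := fun b => ‖A i b‖ ^ 2) (fun b _ => sq_nonneg _)
            (Finset.mem_univ j)
      _ ≤ _ := Finset.single_le_sum (f := fun a => ∑ b, ‖A a b‖ ^ 2)
          (fun a _ => Finset.sum_nonneg fun b _ => sq_nonneg _) (Finset.mem_univ i)
  have h2 := frob_le_sq_traceNorm A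
  nlinarith [norm_nonneg (A i j), traceNorm_nonneg' A]

lemma traceNorm_le_two_sum (A : Matrix (Fin 2) (Fin 2) ℂ) :
    traceNorm A ≤ 2 * ∑ a, ∑ b, ‖A a b‖ := by
  rw [traceNorm_eq_sum_sqrt]
  have hs : ∀ i, Real.sqrt ((Matrix.posSemidef_conjTranspose_mul_self A).1.eigenvalues i)
      ≤ ∑ a, ∑ b, ‖A a b‖ := by
    intro i
    have h1 : (Matrix.posSemidef_conjTranspose_mul_self A).1.eigenvalues i
        ≤ ∑ a, ∑ b, ‖A a b‖ ^ 2 := by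
      rw [← sum_eig_eq_frob]
      exact Finset.single_le_sum
        (fun a _ => (Matrix.posSemidef_conjTranspose_mul_self A).eigenvalues_nonneg a)
        (Finset.mem_univ i)
    have h2 : ∑ a, ∑ b, ‖A a b‖ ^ 2 ≤ (∑ a, ∑ b, ‖A a b‖) ^ 2 := by
      calc ∑ a, ∑ b, ‖A a b‖ ^ 2
          ≤ ∑ a, (∑ b, ‖A a b‖) ^ 2 := Finset.sum_le_sum fun a _ =>
            Finset.sum_sq_le_sq_sum_of_nonneg fun b _ => norm_nonneg _
        _ ≤ (∑ a, ∑ b, ‖A a b‖) ^ 2 := Finset.sum_sq_le_sq_sum_of_nonneg fun a _ =>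
            Finset.sum_nonneg fun b _ => norm_nonneg _
    calc Real.sqrt _ ≤ Real.sqrt ((∑ a, ∑ b, ‖A a b‖) ^ 2) :=
          Real.sqrt_le_sqrt (h1.trans h2)
      _ = ∑ a, ∑ b, ‖A a b‖ := Real.sqrt_sq (Finset.sum_nonneg fun a _ =>
          Finset.sum_nonneg fun b _ => norm_nonneg _)
  calc ∑ i : Fin 2, Real.sqrt ((Matrix.posSemidef_conjTranspose_mul_self A).1.eigenvalues i)
      ≤ ∑ _i : Fin 2, ∑ a, ∑ b, ‖A a b‖ := Finset.sum_le_sum fun i _ => hs i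
    _ = 2 * ∑ a, ∑ b, ‖A a b‖ := by simp [Fin.sum_univ_two]; ring

open scoped MatrixOrder in
lemma psd_sqrt_eq_cfc_sqrt {n : Type*} [Fintype n] [DecidableEq n] {X : Matrix n n ℂ}
    (hX : X.PosSemidef) : hX.sqrt = CFC.sqrt X := by
  rw [CFC.sqrt_eq_cfc, cfc_nnreal_eq_real _ X, hX.1.cfc_eq]
  simp only [Matrix.IsHermitian.cfc, Matrix.PosSemidef.sqrt, Unitary.conjStarAlgAut_apply]
  congr 3
  funext i
  simp [Real.coe_toNNReal', max_eq_left (hX.eigenvalues_nonneg i)]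

open scoped MatrixOrder in
lemma traceNorm_of_sq {n : Type*} [Fintype n] [DecidableEq n] (A B : Matrix n n ℂ)
    (hB : B.PosSemidef) (h : B ^ 2 = Aᴴ * A) : traceNorm A = B.trace.re := by
  rw [traceNorm, psd_sqrt_eq_cfc_sqrt, ← (CFC.sqrt_eq_iff _ _ (Matrix.posSemidef_conjTranspose_mul_self A).nonneg hB.nonneg).mpr (by rw [← h, pow_two])]

lemma two_inv_aux : ((Real.sqrt 2 : ℂ))⁻¹ * ((Real.sqrt 2 : ℂ))⁻¹ = 2⁻¹ := by
  rw [← mul_inv, show ((Real.sqrt 2 : ℂ)) * ((Real.sqrt 2 : ℂ)) = 2 by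
    norm_cast; exact Real.mul_self_sqrt (by norm_num)]

lemma plus_minus_diff :
    Matrix.vecMulVec ketPlus (star ketPlus) - Matrix.vecMulVec ketMinus (star ketMinus)
      = !![0, 1; 1, 0] := by
  ext i j
  fin_cases i <;> fin_cases j <;>
    simp only [Matrix.sub_apply, Matrix.vecMulVec_apply] <;>
    simp [Matrix.vecMulVec_apply, ketPlus, ketMinus, Pi.star_apply, Complex.star_def,
      map_inv₀, Complex.conj_ofReal, two_inv_aux] <;>
    norm_num

lemma ampK_sigmaX (p η : ℝ) (hp0 : 0 ≤ p) (hp1 : p ≤ 1) :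
    (∑ i, ampK p η i * !![(0:ℂ), 1; 1, 0] * (ampK p η i)ᴴ)
      = (Real.sqrt η : ℂ) • !![0, 1; 1, 0] := by
  have hp2 : (Real.sqrt p : ℂ) * (Real.sqrt p : ℂ) = (p : ℂ) := by
    norm_cast; exact Real.mul_self_sqrt hp0
  have hq2 : (Real.sqrt (1 - p) : ℂ) * (Real.sqrt (1 - p) : ℂ) = 1 - (p : ℂ) := by
    have := Real.mul_self_sqrt (show (0:ℝ) ≤ 1 - p by linarith)
    norm_cast
  ext i j
  fin_cases i <;> fin_cases j <;>
    simp [ampK, Fin.sum_univ_four, Matrix.mul_apply, Fin.sum_univ_two,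
      Matrix.conjTranspose_apply, Complex.star_def, _root_.map_mul, Complex.conj_ofReal,
      Matrix.smul_apply, smul_eq_mul, Matrix.vecMul, dotProduct] <;>
    linear_combination (Real.sqrt η : ℂ) * hp2 + (Real.sqrt η : ℂ) * hq2

lemma traceNorm_smul_sigmaX (c : ℝ) (hc : 0 ≤ c) :
    traceNorm ((c : ℂ) • !![0, 1; 1, 0]) = 2 * c := by
  have hB : (Matrix.diagonal (fun _ : Fin 2 => (c : ℂ))).PosSemidef :=
    Matrix.posSemidef_diagonal_iff.mpr fun i => Complex.zero_le_real.mpr hc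
  have h : (Matrix.diagonal (fun _ : Fin 2 => (c : ℂ))) ^ 2
      = ((c : ℂ) • !![0, 1; 1, 0])ᴴ * ((c : ℂ) • !![0, 1; 1, 0]) := by
    ext i j
    fin_cases i <;> fin_cases j <;>
      simp [pow_two, Matrix.mul_apply, Fin.sum_univ_two, Matrix.diagonal,
        Complex.star_def, Complex.conj_ofReal, Matrix.smul_apply, smul_eq_mul]
  rw [traceNorm_of_sq _ _ hB h]
  simp [Matrix.trace, Matrix.diag, Fin.sum_univ_two]

lemma vecMulVec_posSemidef {n : Type*} [Fintype n] [DecidableEq n] (v : n → ℂ) :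
    (Matrix.vecMulVec v (star v)).PosSemidef := by
  rw [Matrix.vecMulVec_eq Unit, show Matrix.replicateCol Unit v = (Matrix.replicateRow Unit (star v))ᴴ by
    rw [Matrix.conjTranspose_replicateRow, star_star]]
  exact Matrix.posSemidef_conjTranspose_mul_self _

lemma trace_ketPlus : (Matrix.vecMulVec ketPlus (star ketPlus)).trace = 1 := by
  simp [Matrix.trace, Matrix.diag, Matrix.vecMulVec_apply, ketPlus, Fin.sum_univ_two,
    Pi.star_apply, Complex.star_def, map_inv₀, Complex.conj_ofReal, two_inv_aux]
  norm_num

lemma trace_ketMinus : (Matrix.vecMulVec ketMinus (star ketMinus)).trace = 1 := by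
  simp [Matrix.trace, Matrix.diag, Matrix.vecMulVec_apply, ketMinus, Fin.sum_univ_two,
    Pi.star_apply, Complex.star_def, map_inv₀, Complex.conj_ofReal, two_inv_aux]
  norm_num

/-- for the amplitude damping channel `A_{p,η}`,
`(1/2)‖A_{p,η}(|+⟩⟨+|) − A_{p,η}(|−⟩⟨−|)‖₁ = √η`, hence `η_tr(A_{p,η}) ≥ √η`. -/
theorem amplitude_damping_lower_bound (p η : ℝ)
    (hp : p ∈ Set.Icc (0 : ℝ) 1) (hη : η ∈ Set.Icc (0 : ℝ) 1)
    (Φ : Matrix (Fin 2) (Fin 2) ℂ → Matrix (Fin 2) (Fin 2) ℂ)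
    (hΦ : ∀ x, Φ x = ∑ i, ampK p η i * x * (ampK p η i)ᴴ) :
    (1 / 2) * traceNorm
        (Φ (Matrix.vecMulVec ketPlus (star ketPlus))
          - Φ (Matrix.vecMulVec ketMinus (star ketMinus)))
      = Real.sqrt η ∧
    Real.sqrt η ≤ etaTr Φ := by
  obtain ⟨hp0, hp1⟩ := hp
  obtain ⟨hη0, hη1⟩ := hη
  set ρp := Matrix.vecMulVec ketPlus (star ketPlus) with hρp_def
  set ρm := Matrix.vecMulVec ketMinus (star ketMinus) with hρm_def
  have hsub : ∀ ρ σ : Matrix (Fin 2) (Fin 2) ℂ,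
      Φ ρ - Φ σ = ∑ i, ampK p η i * (ρ - σ) * (ampK p η i)ᴴ := by
    intro ρ σ
    rw [hΦ, hΦ, ← Finset.sum_sub_distrib]
    exact Finset.sum_congr rfl fun i _ => by rw [Matrix.mul_sub, Matrix.sub_mul]
  have hdiff : Φ ρp - Φ ρm = (Real.sqrt η : ℂ) • !![0, 1; 1, 0] := by
    rw [hsub, plus_minus_diff, ampK_sigmaX p η hp0 hp1]
  have htn1 : traceNorm (Φ ρp - Φ ρm) = 2 * Real.sqrt η := by
    rw [hdiff, traceNorm_smul_sigmaX _ (Real.sqrt_nonneg η)]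
  have htn2 : traceNorm (ρp - ρm) = 2 := by
    have := traceNorm_smul_sigmaX 1 zero_le_one
    rw [plus_minus_diff]
    simpa using this
  constructor
  · rw [htn1]; ring
  · -- membership
    have hmem : Real.sqrt η ∈ {r : ℝ | ∃ ρ σ : Matrix (Fin 2) (Fin 2) ℂ,
        IsDensity ρ ∧ IsDensity σ ∧ ρ ≠ σ ∧
        r = traceNorm (Φ ρ - Φ σ) / traceNorm (ρ - σ)} := by
      refine ⟨ρp, ρm, ⟨vecMulVec_posSemidef _, trace_ketPlus⟩,
        ⟨vecMulVec_posSemidef _, trace_ketMinus⟩, ?_, ?_⟩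
      · intro h
        have h01 := congrFun (congrFun h 0) 1
        simp [hρp_def, hρm_def, Matrix.vecMulVec_apply, ketPlus, ketMinus,
          Pi.star_apply, Complex.star_def, map_inv₀, Complex.conj_ofReal] at h01
        rw [two_inv_aux] at h01
        norm_num at h01
      · rw [htn1, htn2]
        ring
    have hK : ∀ i a b, ‖ampK p η i a b‖ ≤ 1 := by
      have sp : Real.sqrt p ≤ 1 := Real.sqrt_le_one.mpr hp1
      have sq : Real.sqrt (1 - p) ≤ 1 := Real.sqrt_le_one.mpr (by linarith)
      have se : Real.sqrt η ≤ 1 := Real.sqrt_le_one.mpr hη1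
      have sf : Real.sqrt (1 - η) ≤ 1 := Real.sqrt_le_one.mpr (by linarith)
      have np := Real.sqrt_nonneg p
      have nq := Real.sqrt_nonneg (1 - p)
      have ne' := Real.sqrt_nonneg η
      have nf := Real.sqrt_nonneg (1 - η)
      intro i a b
      fin_cases i <;> fin_cases a <;> fin_cases b <;>
        simp [ampK, Complex.norm_real, abs_of_nonneg, *] <;>
        nlinarith
    have hbdd : ∀ r ∈ {r : ℝ | ∃ ρ σ : Matrix (Fin 2) (Fin 2) ℂ,
        IsDensity ρ ∧ IsDensity σ ∧ ρ ≠ σ ∧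
        r = traceNorm (Φ ρ - Φ σ) / traceNorm (ρ - σ)}, r ≤ 128 := by
      rintro r ⟨ρ, σ, hρ, hσ, hne, rfl⟩
      set H := ρ - σ with hH_def
      have hHpos : 0 < traceNorm H := by
        have hex : ∃ k l, H k l ≠ 0 := by
          by_contra hcon
          push_neg at hcon
          exact hne (sub_eq_zero.mp (by ext k l; simpa [hH_def] using hcon k l))
        obtain ⟨k, l, hkl⟩ := hex
        exact lt_of_lt_of_le (norm_pos_iff.mpr hkl) (entry_le_traceNorm H k l)
      have hGentry : ∀ a b, ‖(Φ ρ - Φ σ) a b‖ ≤ 4 * ∑ c, ∑ d, ‖H c d‖ := by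
        intro a b
        rw [hsub, ← hH_def]
        have step : ∀ i : Fin 4,
            ‖(ampK p η i * H * (ampK p η i)ᴴ) a b‖ ≤ ∑ c, ∑ d, ‖H c d‖ := by
          intro i
          rw [Matrix.mul_apply]
          refine le_trans (norm_sum_le _ _) ?_
          rw [Finset.sum_comm]
          refine Finset.sum_le_sum fun d _ => ?_
          rw [Matrix.mul_apply]
          calc ‖(∑ c, ampK p η i a c * H c d) * (ampK p η i)ᴴ d b‖
              = ‖∑ c, ampK p η i a c * H c d‖ * ‖(ampK p η i)ᴴ d b‖ := norm_mul _ _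
            _ ≤ ‖∑ c, ampK p η i a c * H c d‖ * 1 := by
                refine mul_le_mul_of_nonneg_left ?_ (norm_nonneg _)
                rw [Matrix.conjTranspose_apply, norm_star]
                exact hK i b d
            _ = ‖∑ c, ampK p η i a c * H c d‖ := mul_one _
            _ ≤ ∑ c, ‖ampK p η i a c * H c d‖ := norm_sum_le _ _
            _ ≤ ∑ c, ‖H c d‖ := by
                refine Finset.sum_le_sum fun c _ => ?_
                rw [norm_mul]
                calc ‖ampK p η i a c‖ * ‖H c d‖ ≤ 1 * ‖H c d‖ :=
                      mul_le_mul_of_nonneg_right (hK i a c) (norm_nonneg _)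
                  _ = ‖H c d‖ := one_mul _
        calc ‖(∑ i, ampK p η i * H * (ampK p η i)ᴴ) a b‖
            = ‖∑ i, (ampK p η i * H * (ampK p η i)ᴴ) a b‖ := by
              rw [Matrix.sum_apply]
          _ ≤ ∑ i : Fin 4, ‖(ampK p η i * H * (ampK p η i)ᴴ) a b‖ := norm_sum_le _ _
          _ ≤ ∑ _i : Fin 4, ∑ c, ∑ d, ‖H c d‖ := Finset.sum_le_sum fun i _ => step i
          _ = 4 * ∑ c, ∑ d, ‖H c d‖ := by
              rw [Finset.sum_const, Finset.card_univ]
              simp; ring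
      have hHsum : ∑ c, ∑ d, ‖H c d‖ ≤ 4 * traceNorm H := by
        calc ∑ c, ∑ d, ‖H c d‖ ≤ ∑ _c : Fin 2, ∑ _d : Fin 2, traceNorm H :=
              Finset.sum_le_sum fun c _ => Finset.sum_le_sum fun d _ =>
                entry_le_traceNorm H c d
          _ = 4 * traceNorm H := by simp [Fin.sum_univ_two]; ring
      have hG : traceNorm (Φ ρ - Φ σ) ≤ 128 * traceNorm H := by
        calc traceNorm (Φ ρ - Φ σ) ≤ 2 * ∑ a, ∑ b, ‖(Φ ρ - Φ σ) a b‖ :=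
              traceNorm_le_two_sum _
          _ ≤ 2 * ∑ _a : Fin 2, ∑ _b : Fin 2, (4 * ∑ c, ∑ d, ‖H c d‖) := by
              refine mul_le_mul_of_nonneg_left ?_ (by norm_num)
              exact Finset.sum_le_sum fun a _ => Finset.sum_le_sum fun b _ => hGentry a b
          _ = 32 * ∑ c, ∑ d, ‖H c d‖ := by simp [Fin.sum_univ_two]; ring
          _ ≤ 32 * (4 * traceNorm H) := by
              refine mul_le_mul_of_nonneg_left hHsum (by norm_num)
          _ = 128 * traceNorm H := by ring
      rw [div_le_iff₀ hHpos]
      exact hG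
    exact le_csSup ⟨128, hbdd⟩ hmem
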